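/- Let n and k be integers with 2 ≤ k ≤ n, let μ be the product of n independent copies of the uniform probability measure on the interval [0,1], and let τ : [0,1]^n → ℝ send each point x to its k-th smallest coordinate. Then the bottom-k cardinality estimator (k−1)/τ is an unbiased estimator of n, i.e. ∫ (k−1)/τ(x) dμ(x) = n. -/

import Mathlib

open MeasureTheory Finset
open scoped ENNReal NNReal

lemma sorted_getD_le_iff {l : List ℝ} (hl : l.Pairwise (· ≤ ·)) {u : ℝ} :
    ∀ {i : ℕ}, i < l.length → (l.getD i 0 ≤ u ↔ i < l.countP (fun a => a ≤ u)) := by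
  induction l with
  | nil => intro i hi; simp at hi
  | cons a t ih =>
    rw [List.pairwise_cons] at hl
    intro i hi
    cases i with
    | zero =>
      simp only [List.getD_cons_zero, List.countP_cons]
      constructor
      · intro h
        have : (if decide (a ≤ u) = true then 1 else 0) = 1 := by simp [h]
        omega
      · intro h
        by_contra hau
        push_neg at hau
        have h1 : List.countP (fun a => decide (a ≤ u)) t = 0 := by
          rw [List.countP_eq_zero]
          intro b hb
          simp only [decide_eq_true_eq]
          exact not_le.2 (lt_of_lt_of_le hau (hl.1 b hb))
        simp [h1, hau.not_ge] at h
    | succ i =>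
      simp only [List.getD_cons_succ, List.countP_cons, List.length_cons] at *
      by_cases hau : a ≤ u
      · rw [ih hl.2 (by omega)]
        simp [hau]
      · have h1 : List.countP (fun a => decide (a ≤ u)) t = 0 := by
          rw [List.countP_eq_zero]
          intro b hb
          simp only [decide_eq_true_eq]
          intro hbu; exact hau (le_trans (hl.1 b hb) hbu)
        have h2 : ¬ t.getD i 0 ≤ u := by
          intro h
          have := (ih hl.2 (by omega)).1 h
          omega
        constructor
        · intro h; exact absurd h h2
        · intro h; simp [h1, hau] at h

lemma countP_ofFn {n : ℕ} (x : Fin n → ℝ) (u : ℝ) :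
    (List.ofFn x).countP (fun a => a ≤ u) = (Finset.univ.filter (fun i => x i ≤ u)).card := by
  rw [List.ofFn_eq_map, List.countP_map]
  rw [Finset.card_filter, List.countP_eq_length_filter, Finset.sum_boole]
  simp only [Nat.cast_id]
  rw [← List.countP_eq_length_filter]
  show List.countP _ (List.finRange n) = _
  rw [List.countP_eq_length_filter]
  rfl

/-- The `k`-th smallest coordinate (the `k`-th order statistic) of a point of `[0,1]^n`
(more generally of `ℝ^n`). -/
noncomputable def kthSmallest (n k : ℕ) (x : Fin n → ℝ) : ℝ :=
  (List.insertionSort (· ≤ ·) (List.ofFn x)).getD (k - 1) 0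

/-- Lemma A -/
lemma kthSmallest_le_iff {n k : ℕ} (hk : 1 ≤ k) (hkn : k ≤ n) (x : Fin n → ℝ) (u : ℝ) :
    kthSmallest n k x ≤ u ↔ k ≤ (Finset.univ.filter (fun i => x i ≤ u)).card := by
  unfold kthSmallest
  have hlen : (List.insertionSort (· ≤ ·) (List.ofFn x)).length = n := by
    simp [List.length_insertionSort]
  have hs : (List.insertionSort (· ≤ ·) (List.ofFn x)).Pairwise (· ≤ ·) :=
    List.pairwise_insertionSort _ _
  rw [sorted_getD_le_iff hs (by omega)]
  rw [(List.perm_insertionSort (· ≤ ·) (List.ofFn x)).countP_eq, countP_ofFn]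
  omega

/-- kthSmallest is a coordinate -/
lemma kthSmallest_mem_range {n k : ℕ} (hk : 1 ≤ k) (hkn : k ≤ n) (x : Fin n → ℝ) :
    ∃ i, kthSmallest n k x = x i := by
  unfold kthSmallest
  have hlen : (List.insertionSort (· ≤ ·) (List.ofFn x)).length = n := by
    simp [List.length_insertionSort]
  have hkl : k - 1 < (List.insertionSort (· ≤ ·) (List.ofFn x)).length := by omega
  rw [List.getD_eq_getElem _ _ hkl]
  have : (List.insertionSort (· ≤ ·) (List.ofFn x))[k-1] ∈ List.ofFn x := by
    exact ((List.perm_insertionSort (· ≤ ·) (List.ofFn x))).mem_iff.1 (List.getElem_mem hkl)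
  rw [List.mem_ofFn] at this
  obtain ⟨i, hi⟩ := this
  exact ⟨i, hi.symm⟩

/-- The product of `n` independent copies of the uniform probability measure on `[0,1]`. -/
noncomputable def unifCube (n : ℕ) : Measure (Fin n → ℝ) :=
  Measure.pi fun _ => volume.restrict (Set.Icc 0 1)

instance (n : ℕ) : IsProbabilityMeasure (unifCube n) := by
  have : ∀ i : Fin n, IsProbabilityMeasure (volume.restrict (Set.Icc (0:ℝ) 1)) := by
    intro i
    constructor
    simp [Real.volume_Icc]
  unfold unifCube
  infer_instance

def cell (n : ℕ) (u : ℝ) (s : Finset (Fin n)) : Set (Fin n → ℝ) :=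
  Set.pi Set.univ (fun i => if i ∈ s then Set.Iic u else Set.Ioi u)

lemma mem_cell_iff {n : ℕ} {u : ℝ} {s : Finset (Fin n)} {x : Fin n → ℝ} :
    x ∈ cell n u s ↔ (Finset.univ.filter fun i => x i ≤ u) = s := by
  simp only [cell, Set.mem_pi, Set.mem_univ, forall_true_left]
  constructor
  · intro h
    ext i
    simp only [Finset.mem_filter, Finset.mem_univ, true_and]
    have := h i
    by_cases hi : i ∈ s <;> simp [hi] at this ⊢ <;> exact this
  · intro h i
    by_cases hi : i ∈ s <;> simp [hi]
    · have : i ∈ Finset.univ.filter fun i => x i ≤ u := h ▸ hi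
      simpa using this
    · have : i ∉ Finset.univ.filter fun i => x i ≤ u := h ▸ hi
      simpa using not_le.1 (by simpa using this)

lemma measurableSet_cell (n : ℕ) (u : ℝ) (s : Finset (Fin n)) :
    MeasurableSet (cell n u s) := by
  apply MeasurableSet.univ_pi
  intro i
  by_cases hi : i ∈ s <;> simp [hi, measurableSet_Iic, measurableSet_Ioi]

lemma countSet_eq_biUnion (n k : ℕ) (u : ℝ) :
    {x : Fin n → ℝ | k ≤ (Finset.univ.filter fun i => x i ≤ u).card}
      = ⋃ s ∈ Finset.univ.powerset.filter (fun s : Finset (Fin n) => k ≤ s.card),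
          cell n u s := by
  ext x
  simp only [Set.mem_setOf_eq, Set.mem_iUnion, Finset.mem_filter, Finset.mem_powerset]
  constructor
  · intro h
    exact ⟨Finset.univ.filter fun i => x i ≤ u, ⟨⟨Finset.filter_subset _ _, h⟩, mem_cell_iff.2 rfl⟩⟩
  · rintro ⟨s, ⟨⟨-, hs⟩, hx⟩⟩
    rw [mem_cell_iff.1 hx]; exact hs

lemma measure_cell {n : ℕ} {u : ℝ} (hu0 : 0 ≤ u) (hu1 : u ≤ 1) (s : Finset (Fin n)) :
    unifCube n (cell n u s)
      = ENNReal.ofReal u ^ s.card * ENNReal.ofReal (1 - u) ^ (n - s.card) := by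
  unfold unifCube cell
  rw [Measure.pi_pi]
  rw [← Finset.prod_mul_prod_compl s]
  have h1 : ∀ i ∈ s, (volume.restrict (Set.Icc (0:ℝ) 1)) (if i ∈ s then Set.Iic u else Set.Ioi u)
      = ENNReal.ofReal u := by
    intro i hi
    rw [if_pos hi, Measure.restrict_apply measurableSet_Iic]
    rw [show Set.Iic u ∩ Set.Icc 0 1 = Set.Icc 0 u by
      ext y; simp only [Set.mem_inter_iff, Set.mem_Iic, Set.mem_Icc]; constructor
      · rintro ⟨h1, h2, h3⟩; exact ⟨h2, h1⟩
      · rintro ⟨h1, h2⟩; exact ⟨h2, h1, le_trans h2 hu1⟩]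
    rw [Real.volume_Icc]; simp
  have h2 : ∀ i ∈ sᶜ, (volume.restrict (Set.Icc (0:ℝ) 1)) (if i ∈ s then Set.Iic u else Set.Ioi u)
      = ENNReal.ofReal (1 - u) := by
    intro i hi
    rw [if_neg (Finset.mem_compl.1 hi), Measure.restrict_apply measurableSet_Ioi]
    rw [show Set.Ioi u ∩ Set.Icc 0 1 = Set.Ioc u 1 by
      ext y; simp only [Set.mem_inter_iff, Set.mem_Ioi, Set.mem_Icc, Set.mem_Ioc]; constructor
      · rintro ⟨h1, h2, h3⟩; exact ⟨h1, h3⟩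
      · rintro ⟨h1, h2⟩; exact ⟨h1, le_trans hu0 h1.le, h2⟩]
    rw [Real.volume_Ioc]
  rw [Finset.prod_congr rfl h1, Finset.prod_congr rfl h2]
  rw [Finset.prod_const, Finset.prod_const, Finset.card_compl]
  simp

lemma measure_countSet {n k : ℕ} {u : ℝ} (hu0 : 0 ≤ u) (hu1 : u ≤ 1) :
    unifCube n {x : Fin n → ℝ | k ≤ (Finset.univ.filter fun i => x i ≤ u).card}
      = ∑ j ∈ Finset.Ico k (n+1),
          (n.choose j : ℝ≥0∞) * ENNReal.ofReal u ^ j * ENNReal.ofReal (1 - u) ^ (n - j) := by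
  rw [countSet_eq_biUnion]
  rw [measure_biUnion_finset ?_ (fun s _ => measurableSet_cell n u s)]
  · have hT : Finset.univ.powerset.filter (fun s : Finset (Fin n) => k ≤ s.card)
        = (Finset.Ico k (n+1)).biUnion (fun j => Finset.powersetCard j Finset.univ) := by
      ext s
      simp only [Finset.mem_filter, Finset.mem_powerset, Finset.mem_biUnion, Finset.mem_Ico,
        Finset.mem_powersetCard]
      have := Finset.card_le_univ s
      simp only [Finset.card_univ, Fintype.card_fin] at this
      constructor
      · rintro ⟨-, hks⟩; exact ⟨s.card, ⟨hks, by omega⟩, Finset.subset_univ s, rfl⟩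
      · rintro ⟨j, ⟨hkj, -⟩, -, hcard⟩; exact ⟨Finset.subset_univ s, hcard ▸ hkj⟩
    rw [hT, Finset.sum_biUnion]
    · apply Finset.sum_congr rfl
      intro j hj
      have : ∀ s ∈ Finset.powersetCard j (Finset.univ : Finset (Fin n)),
          unifCube n (cell n u s) = ENNReal.ofReal u ^ j * ENNReal.ofReal (1 - u) ^ (n - j) := by
        intro s hs
        rw [measure_cell hu0 hu1, (Finset.mem_powersetCard.1 hs).2]
      rw [Finset.sum_congr rfl this, Finset.sum_const, Finset.card_powersetCard]
      simp [Finset.card_univ, mul_assoc, nsmul_eq_mul]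
    · intro j1 h1 j2 h2 hne
      simp only [Function.onFun]
      apply Finset.disjoint_left.2
      intro s hs1 hs2
      rw [Finset.mem_powersetCard] at hs1 hs2
      exact hne (hs1.2 ▸ hs2.2.symm ▸ rfl)
  · intro s1 hs1 s2 hs2 hne
    simp only [Function.onFun]
    apply Set.disjoint_left.2
    intro x hx1 hx2
    exact hne ((mem_cell_iff.1 hx1).symm.trans (mem_cell_iff.1 hx2))

noncomputable def ordF (n k : ℕ) (u : ℝ) : ℝ :=
  ∑ j ∈ Finset.Ico k (n+1), (n.choose j : ℝ) * u ^ j * (1 - u) ^ (n - j)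

noncomputable def ordf (n k : ℕ) (u : ℝ) : ℝ :=
  (k : ℝ) * (n.choose k : ℝ) * u ^ (k - 1) * (1 - u) ^ (n - k)

noncomputable def ordh (n j : ℕ) (u : ℝ) : ℝ :=
  (j : ℝ) * (n.choose j : ℝ) * u ^ (j - 1) * (1 - u) ^ (n - j)

lemma hasDerivAt_term (n j : ℕ) (u : ℝ) :
    HasDerivAt (fun v => (n.choose j : ℝ) * v ^ j * (1 - v) ^ (n - j))
      (ordh n j u - ordh n (j+1) u) u := by
  have h1 : HasDerivAt (fun v : ℝ => v ^ j) ((j:ℝ) * u ^ (j-1)) u := hasDerivAt_pow j u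
  have h2 : HasDerivAt (fun v : ℝ => (1 - v) ^ (n - j))
      (-( ((n-j : ℕ):ℝ) * (1 - u) ^ (n - j - 1))) u := by
    have hin : HasDerivAt (fun v : ℝ => 1 - v) (-1) u := by
      simpa using ((hasDerivAt_id u).const_sub 1)
    exact ((hasDerivAt_pow (n-j) (1-u)).comp u hin).congr_deriv (by ring)
  have H := ((h1.mul h2).const_mul (n.choose j : ℝ))
  have heq : (fun v : ℝ => (n.choose j : ℝ) * v ^ j * (1 - v) ^ (n - j))
      = fun v : ℝ => (n.choose j : ℝ) * (v ^ j * (1 - v) ^ (n - j)) := by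
    funext v; ring
  rw [heq]
  refine H.congr_deriv ?_
  have hch : ((j:ℝ) + 1) * (n.choose (j+1) : ℝ) = (n.choose j : ℝ) * ((n - j : ℕ):ℝ) := by
    rw [mul_comm]
    exact_mod_cast congrArg (Nat.cast : ℕ → ℝ) (Nat.choose_succ_right_eq n j)
  unfold ordh
  simp only [Nat.add_sub_cancel, ← Nat.sub_sub]
  push_cast
  linear_combination (u ^ j * (1 - u) ^ (n - j - 1)) * hch

lemma hasDerivAt_ordF {n k : ℕ} (hk : 1 ≤ k) (hkn : k ≤ n) (u : ℝ) :
    HasDerivAt (ordF n k) (ordf n k u) u := by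
  have h : HasDerivAt (fun u => ∑ j ∈ Finset.Ico k (n+1),
        (n.choose j : ℝ) * u ^ j * (1 - u) ^ (n - j))
      (∑ j ∈ Finset.Ico k (n+1), (ordh n j u - ordh n (j+1) u)) u :=
    HasDerivAt.fun_sum (fun j _ => hasDerivAt_term n j u)
  have htel : ∑ j ∈ Finset.Ico k (n+1), (ordh n j u - ordh n (j+1) u) = ordf n k u := by
    rw [Finset.sum_Ico_eq_sub _ (by omega), Finset.sum_range_sub' (fun j => ordh n j u),
      Finset.sum_range_sub' (fun j => ordh n j u)]
    have h0 : ordh n (n+1) u = 0 := by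
      unfold ordh
      rw [Nat.choose_eq_zero_of_lt (by omega)]
      simp
    have : ordh n k u = ordf n k u := rfl
    rw [h0, this]; ring
  rw [← htel]
  exact h

lemma ordF_zero {n k : ℕ} (hk : 1 ≤ k) : ordF n k 0 = 0 := by
  unfold ordF
  apply Finset.sum_eq_zero
  intro j hj
  rw [Finset.mem_Ico] at hj
  rw [zero_pow (by omega)]
  ring

lemma ordF_one {n k : ℕ} (hkn : k ≤ n) : ordF n k 1 = 1 := by
  unfold ordF
  rw [Finset.sum_eq_single n]
  · simp
  · intro j hj hne
    rw [Finset.mem_Ico] at hj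
    rw [show (1:ℝ) - 1 = 0 from by ring, zero_pow (by omega)]
    ring
  · intro h
    exact absurd (Finset.mem_Ico.2 ⟨hkn, by omega⟩) h

lemma continuous_ordf (n k : ℕ) : Continuous (ordf n k) := by
  unfold ordf
  continuity

lemma integral_ordf {n k : ℕ} (hk : 1 ≤ k) (hkn : k ≤ n) (a b : ℝ) :
    ∫ u in a..b, ordf n k u = ordF n k b - ordF n k a :=
  intervalIntegral.integral_eq_sub_of_hasDerivAt (fun u _ => hasDerivAt_ordF hk hkn u)
    ((continuous_ordf n k).intervalIntegrable a b)

lemma ordf_nonneg {n k : ℕ} {u : ℝ} (h0 : 0 ≤ u) (h1 : u ≤ 1) : 0 ≤ ordf n k u := by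
  unfold ordf
  have ha : (0:ℝ) ≤ 1 - u := by linarith
  apply mul_nonneg (mul_nonneg (mul_nonneg (by positivity) (by positivity)) (pow_nonneg h0 _))
    (pow_nonneg ha _)


section Assembly

variable {n k : ℕ}

lemma measurable_kthSmallest (hk : 1 ≤ k) (hkn : k ≤ n) :
    Measurable (kthSmallest n k) := by
  apply measurable_of_Iic
  intro u
  have : kthSmallest n k ⁻¹' Set.Iic u
      = {x : Fin n → ℝ | k ≤ (Finset.univ.filter fun i => x i ≤ u).card} := by
    ext x
    simp only [Set.mem_preimage, Set.mem_Iic, Set.mem_setOf_eq]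
    exact kthSmallest_le_iff hk hkn x u
  rw [this, countSet_eq_biUnion n k u]
  exact (Finset.univ.powerset.filter (fun s : Finset (Fin n) => k ≤ s.card)).measurableSet_biUnion
    (fun s _ => measurableSet_cell n u s)

lemma measure_kth_le {u : ℝ} (hk : 1 ≤ k) (hkn : k ≤ n) (hu0 : 0 ≤ u) (hu1 : u ≤ 1) :
    unifCube n {x | kthSmallest n k x ≤ u} = ENNReal.ofReal (ordF n k u) := by
  have hset : {x : Fin n → ℝ | kthSmallest n k x ≤ u}
      = {x : Fin n → ℝ | k ≤ (Finset.univ.filter fun i => x i ≤ u).card} := by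
    ext x; exact kthSmallest_le_iff hk hkn x u
  rw [hset, measure_countSet hu0 hu1]
  unfold ordF
  rw [ENNReal.ofReal_sum_of_nonneg]
  · apply Finset.sum_congr rfl
    intro j hj
    rw [ENNReal.ofReal_mul (by positivity), ENNReal.ofReal_mul (by positivity),
      ENNReal.ofReal_pow hu0, ENNReal.ofReal_pow (by linarith), ENNReal.ofReal_natCast]
  · intro j hj
    have h1u : (0:ℝ) ≤ 1 - u := by linarith
    positivity

lemma cube_compl_null (hn : 0 < n) :
    unifCube n (Set.pi Set.univ (fun _ : Fin n => Set.Icc (0:ℝ) 1))ᶜ = 0 := by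
  have hm : MeasurableSet (Set.pi Set.univ (fun _ : Fin n => Set.Icc (0:ℝ) 1)) :=
    MeasurableSet.univ_pi (fun _ => measurableSet_Icc)
  have h1 : unifCube n (Set.pi Set.univ (fun _ : Fin n => Set.Icc (0:ℝ) 1)) = 1 := by
    unfold unifCube
    rw [Measure.pi_pi]
    simp [Real.volume_Icc]
  rw [measure_compl hm (by rw [h1]; exact ENNReal.one_ne_top), h1, measure_univ, tsub_self]

lemma kth_mem_Icc (hk : 1 ≤ k) (hkn : k ≤ n) {x : Fin n → ℝ}
    (hx : x ∈ Set.pi Set.univ (fun _ : Fin n => Set.Icc (0:ℝ) 1)) :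
    kthSmallest n k x ∈ Set.Icc (0:ℝ) 1 := by
  obtain ⟨i, hi⟩ := kthSmallest_mem_range hk hkn x
  rw [hi]
  exact hx i (Set.mem_univ i)

/-- identification of the law of the k-th order statistic -/
lemma map_kthSmallest (hk : 1 ≤ k) (hkn : k ≤ n) :
    (unifCube n).map (kthSmallest n k)
      = (volume.restrict (Set.Icc (0:ℝ) 1)).withDensity
          (fun u => ENNReal.ofReal (ordf n k u)) := by
  have hn : 0 < n := by omega
  have hτ := measurable_kthSmallest hk hkn
  have : IsProbabilityMeasure ((unifCube n).map (kthSmallest n k)) :=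
    Measure.isProbabilityMeasure_map hτ.aemeasurable
  refine Measure.ext_of_Iic _ _ (fun a => ?_)
  rw [Measure.map_apply hτ measurableSet_Iic,
    withDensity_apply _ measurableSet_Iic, Measure.restrict_restrict measurableSet_Iic]
  have hcont := continuous_ordf n k
  rcases lt_or_ge a 0 with ha | ha
  · have h1 : kthSmallest n k ⁻¹' Set.Iic a ⊆ (Set.pi Set.univ (fun _ : Fin n => Set.Icc (0:ℝ) 1))ᶜ := by
      intro x hx hmem
      have := (kth_mem_Icc hk hkn hmem).1
      simp only [Set.mem_preimage, Set.mem_Iic] at hx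
      linarith
    have h2 : Set.Iic a ∩ Set.Icc (0:ℝ) 1 = ∅ := by
      ext y; simp only [Set.mem_inter_iff, Set.mem_Iic, Set.mem_Icc, Set.mem_empty_iff_false,
        iff_false, not_and]
      intro h1 h2; linarith
    rw [h2]
    simp only [Measure.restrict_empty, lintegral_zero_measure]
    exact measure_mono_null h1 (cube_compl_null hn)
  rcases le_or_gt a 1 with ha1 | ha1
  · have h2 : Set.Iic a ∩ Set.Icc (0:ℝ) 1 = Set.Icc 0 a := by
      ext y; simp only [Set.mem_inter_iff, Set.mem_Iic, Set.mem_Icc]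
      constructor
      · rintro ⟨hy1, hy2, hy3⟩; exact ⟨hy2, hy1⟩
      · rintro ⟨hy1, hy2⟩; exact ⟨hy2, hy1, by linarith⟩
    rw [h2]
    have hint : IntegrableOn (ordf n k) (Set.Icc 0 a) volume :=
      hcont.integrableOn_Icc
    have hnn : 0 ≤ᵐ[volume.restrict (Set.Icc 0 a)] (ordf n k) := by
      filter_upwards [ae_restrict_mem measurableSet_Icc] with u hu
      exact ordf_nonneg hu.1 (by linarith [hu.2])
    rw [← ofReal_integral_eq_lintegral_ofReal hint hnn]
    rw [integral_Icc_eq_integral_Ioc, ← intervalIntegral.integral_of_le ha,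
      integral_ordf hk hkn, ordF_zero hk, sub_zero]
    have : kthSmallest n k ⁻¹' Set.Iic a = {x | kthSmallest n k x ≤ a} := rfl
    rw [this, measure_kth_le hk hkn ha ha1]
  · have h2 : Set.Iic a ∩ Set.Icc (0:ℝ) 1 = Set.Icc 0 1 := by
      ext y; simp only [Set.mem_inter_iff, Set.mem_Iic, Set.mem_Icc]
      constructor
      · rintro ⟨hy1, hy2, hy3⟩; exact ⟨hy2, hy3⟩
      · rintro ⟨hy1, hy2⟩; exact ⟨by linarith, hy1, hy2⟩
    rw [h2]
    have hint : IntegrableOn (ordf n k) (Set.Icc (0:ℝ) 1) volume :=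
      hcont.integrableOn_Icc
    have hnn : 0 ≤ᵐ[volume.restrict (Set.Icc (0:ℝ) 1)] (ordf n k) := by
      filter_upwards [ae_restrict_mem measurableSet_Icc] with u hu
      exact ordf_nonneg hu.1 hu.2
    rw [← ofReal_integral_eq_lintegral_ofReal hint hnn]
    rw [integral_Icc_eq_integral_Ioc, ← intervalIntegral.integral_of_le zero_le_one,
      integral_ordf hk hkn, ordF_zero hk, sub_zero, ordF_one hkn, ENNReal.ofReal_one]
    have hsub : Set.pi Set.univ (fun _ : Fin n => Set.Icc (0:ℝ) 1)
        ⊆ kthSmallest n k ⁻¹' Set.Iic a := by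
      intro x hx
      have := (kth_mem_Icc hk hkn hx).2
      simp only [Set.mem_preimage, Set.mem_Iic]
      linarith
    have hge : 1 ≤ unifCube n (kthSmallest n k ⁻¹' Set.Iic a) := by
      calc (1:ℝ≥0∞) = unifCube n (Set.pi Set.univ (fun _ : Fin n => Set.Icc (0:ℝ) 1)) := by
            unfold unifCube
            rw [Measure.pi_pi]
            simp [Real.volume_Icc]
        _ ≤ _ := measure_mono hsub
    have hle : unifCube n (kthSmallest n k ⁻¹' Set.Iic a) ≤ 1 := prob_le_one
    exact le_antisymm hle hge

lemma key_alg (hk : 2 ≤ k) (hkn : k ≤ n) {u : ℝ} (hu : u ≠ 0) :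
    ordf n k u * (((k:ℝ) - 1)/u) = (n:ℝ) * ordf (n-1) (k-1) u := by
  unfold ordf
  have e1 : (n-1) - (k-1) = n - k := by omega
  have e3 : (k-1) - 1 = k - 2 := by omega
  have e2 : k - 1 = (k-2) + 1 := by omega
  have h2 : n * (n-1).choose (k-1) = n.choose k * k := by
    have h := Nat.add_one_mul_choose_eq (n-1) (k-1)
    rw [show n - 1 + 1 = n from by omega, show k - 1 + 1 = k from by omega] at h
    exact h
  have hc : (n:ℝ) * (((n-1).choose (k-1) : ℕ) : ℝ) = (k:ℝ) * (n.choose k : ℝ) := by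
    exact_mod_cast congrArg (Nat.cast : ℕ → ℝ) (h2.trans (mul_comm _ _))
  have hcast : ((k-1:ℕ):ℝ) = (k:ℝ) - 1 := by
    rw [Nat.cast_sub (by omega)]; simp
  have hpow : u ^ (k-1) = u ^ (k-2) * u := by
    rw [← pow_succ, show k-2+1 = k-1 from by omega]
  rw [e1, e3, hpow, hcast]
  field_simp
  linear_combination (-((k:ℝ) - 1) * (1-u)^(n-k)) * hc

/-- The bottom-`k` cardinality estimator `(k-1)/τ` is an unbiased estimator of `n`. -/
theorem bottom_k_estimator_unbiased (n k : ℕ) (hk : 2 ≤ k) (hkn : k ≤ n) :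
    ∫ x, ((k : ℝ) - 1) / kthSmallest n k x ∂(unifCube n) = n := by
  have hk1 : 1 ≤ k := by omega
  have hτ := measurable_kthSmallest hk1 hkn
  have hg : Measurable (fun u : ℝ => ((k:ℝ) - 1) / u) :=
    measurable_const.div measurable_id
  have step1 : ∫ x, ((k : ℝ) - 1) / kthSmallest n k x ∂(unifCube n)
      = ∫ u, ((k:ℝ) - 1) / u ∂((unifCube n).map (kthSmallest n k)) := by
    rw [integral_map hτ.aemeasurable hg.aestronglyMeasurable]
  rw [step1, map_kthSmallest hk1 hkn]
  have hρ : (volume.restrict (Set.Icc (0:ℝ) 1)).withDensity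
        (fun u => ENNReal.ofReal (ordf n k u))
      = (volume.restrict (Set.Icc (0:ℝ) 1)).withDensity
        (fun u => ((ordf n k u).toNNReal : ℝ≥0∞)) := rfl
  rw [hρ, integral_withDensity_eq_integral_smul
    ((continuous_ordf n k).measurable.real_toNNReal) _]
  have hcongr : ∀ᵐ u ∂(volume.restrict (Set.Icc (0:ℝ) 1)),
      (ordf n k u).toNNReal • (((k:ℝ) - 1) / u) = (n:ℝ) * ordf (n-1) (k-1) u := by
    have hne : ∀ᵐ u ∂(volume.restrict (Set.Icc (0:ℝ) 1)), u ≠ (0:ℝ) := by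
      refine Filter.Eventually.filter_mono (ae_mono Measure.restrict_le_self) ?_
      rw [ae_iff]
      have : {u : ℝ | ¬ u ≠ 0} = {0} := by ext y; simp
      rw [this]
      exact Real.volume_singleton
    filter_upwards [ae_restrict_mem measurableSet_Icc, hne] with u hu hu0
    rw [NNReal.smul_def, Real.coe_toNNReal _ (ordf_nonneg hu.1 hu.2)]
    exact key_alg hk hkn hu0
  rw [integral_congr_ae hcongr]
  rw [MeasureTheory.integral_const_mul]
  rw [integral_Icc_eq_integral_Ioc, ← intervalIntegral.integral_of_le zero_le_one,
    integral_ordf (by omega) (by omega), ordF_zero (by omega), sub_zero, ordF_one (by omega),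
    mul_one]

end Assembly
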